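/- A matching M in a finite bipartite graph is a maximum matching if and only if there is no M-augmenting path (Berge's theorem). -/

import Mathlib

set_option linter.unusedSectionVars false

variable {α β : Type*} [DecidableEq α] [DecidableEq β]

/-- `M` is a matching of the bipartite graph with edge set `E`. -/
def IsMatching (E M : Finset (α × β)) : Prop :=
  M ⊆ E ∧ ∀ e ∈ M, ∀ f ∈ M, (e.1 = f.1 ∨ e.2 = f.2) → e = f

def UnmatchedA (M : Finset (α × β)) (a : α) : Prop := ∀ e ∈ M, e.1 ≠ a

def UnmatchedB (M : Finset (α × β)) (b : β) : Prop := ∀ e ∈ M, e.2 ≠ b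

/-- An `M`-augmenting path `a 0, b 0, a 1, b 1, …, a k, b k`. -/
structure AugPath (E M : Finset (α × β)) (k : ℕ)
    (a : Fin (k + 1) → α) (b : Fin (k + 1) → β) : Prop where
  inj_a : Function.Injective a
  inj_b : Function.Injective b
  unmatched_edges : ∀ i, (a i, b i) ∈ E ∧ (a i, b i) ∉ M
  matched_edges : ∀ i : Fin k, (a i.succ, b i.castSucc) ∈ M
  free_start : UnmatchedA M (a 0)
  free_end : UnmatchedB M (b (Fin.last k))

namespace BergeAux

lemma match_fst {E M : Finset (α × β)} (hm : IsMatching E M) {x : α} {b1 b2 : β}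
    (h1 : (x, b1) ∈ M) (h2 : (x, b2) ∈ M) : b1 = b2 :=
  congrArg Prod.snd (hm.2 _ h1 _ h2 (Or.inl rfl))

lemma match_snd {E M : Finset (α × β)} (hm : IsMatching E M) {a1 a2 : α} {y : β}
    (h1 : (a1, y) ∈ M) (h2 : (a2, y) ∈ M) : a1 = a2 :=
  congrArg Prod.fst (hm.2 _ h1 _ h2 (Or.inr rfl))

/-- An alternating walk starting at `s`, going M'-edge, M-edge, M'-edge, ... -/
structure BWalk (M M' : Finset (α × β)) (s : α) (n : ℕ) where
  a : Fin (n + 1) → α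
  b : Fin n → β
  ha0 : a 0 = s
  inja : Function.Injective a
  hM' : ∀ i : Fin n, (a i.castSucc, b i) ∈ M'
  hM : ∀ i : Fin n, (a i.succ, b i) ∈ M

def BWalk.init {M M' : Finset (α × β)} (s : α) : BWalk M M' s 0 where
  a := fun _ => s
  b := Fin.elim0
  ha0 := rfl
  inja := fun x y _ => by omega
  hM' := fun i => i.elim0
  hM := fun i => i.elim0

def BWalk.trunc {M M' : Finset (α × β)} {s : α} {n : ℕ} (w : BWalk M M' s (n + 1)) :
    BWalk M M' s n where
  a := w.a ∘ Fin.castSucc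
  b := w.b ∘ Fin.castSucc
  ha0 := by simpa using w.ha0
  inja := w.inja.comp (Fin.castSucc_injective _)
  hM' := fun i => w.hM' i.castSucc
  hM := fun i => by
    have := w.hM i.castSucc
    rw [Fin.succ_castSucc] at this
    exact this

end BergeAux

namespace BergeAux

lemma walk_extend {E M M' : Finset (α × β)} {s : α} {n : ℕ}
    (hm : IsMatching E M) (hm' : IsMatching E M')
    (hs : UnmatchedA M s)
    (noaug : ¬ ∃ (k : ℕ) (a : Fin (k + 1) → α) (b : Fin (k + 1) → β), AugPath E M k a b)
    (w : BWalk M M' s n) {b' : β} (hb' : (w.a (Fin.last n), b') ∈ M') :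
    Nonempty (BWalk M M' s (n + 1)) := by
  classical
  -- b' is not hit by walk's previous b's
  by_cases hmatched : ∃ a', (a', b') ∈ M
  · obtain ⟨a', ha'⟩ := hmatched
    -- a' is fresh
    have hfresh : ∀ j : Fin (n + 1), w.a j ≠ a' := by
      intro j hj
      induction j using Fin.cases with
      | zero =>
        exact hs _ ha' (by rw [← hj, w.ha0])
      | succ i =>
        have hbi : w.b i = b' := match_fst hm (w.hM i) (hj ▸ ha')
        have : w.a i.castSucc = w.a (Fin.last n) :=
          match_snd hm' (w.hM' i) (hbi ▸ hb')
        have := w.inja this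
        exact absurd this (Fin.ne_of_lt (Fin.castSucc_lt_last i))
    refine ⟨⟨Fin.snoc w.a a', Fin.snoc w.b b', ?_, ?_, ?_, ?_⟩⟩
    · simp only [show (0 : Fin (n + 2)) = Fin.castSucc 0 from rfl, Fin.snoc_castSucc]
      exact w.ha0
    · -- injectivity of snoc
      intro x y hxy
      induction x using Fin.lastCases with
      | last =>
        induction y using Fin.lastCases with
        | last => rfl
        | cast j =>
          simp only [Fin.snoc_last, Fin.snoc_castSucc] at hxy
          exact absurd hxy.symm (hfresh j)
      | cast i =>
        induction y using Fin.lastCases with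
        | last =>
          simp only [Fin.snoc_last, Fin.snoc_castSucc] at hxy
          exact absurd hxy (hfresh i)
        | cast j =>
          simp only [Fin.snoc_castSucc] at hxy
          exact congrArg Fin.castSucc (w.inja hxy)
    · -- hM'
      intro i
      induction i using Fin.lastCases with
      | last =>
        simp only [Fin.snoc_castSucc, Fin.snoc_last]
        exact hb'
      | cast j =>
        simp only [Fin.snoc_castSucc]
        exact w.hM' j
    · -- hM
      intro i
      induction i using Fin.lastCases with
      | last =>
        simp only [Fin.succ_last, Fin.snoc_last]
        exact ha'
      | cast j =>
        simp only [Fin.succ_castSucc, Fin.snoc_castSucc]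
        exact w.hM j
  · -- b' is M-unmatched : we have an augmenting path, contradiction
    exfalso
    apply noaug
    push_neg at hmatched
    set bb : Fin (n + 1) → β := Fin.snoc w.b b' with hbb
    have hbval : ∀ i : Fin n, bb i.castSucc = w.b i := fun i => Fin.snoc_castSucc ..
    have hblast : bb (Fin.last n) = b' := Fin.snoc_last ..
    have hinM' : ∀ i : Fin (n + 1), (w.a i, bb i) ∈ M' := by
      intro i
      induction i using Fin.lastCases with
      | last => rw [hblast]; exact hb'
      | cast j => rw [hbval]; exact w.hM' j
    refine ⟨n, w.a, bb, w.inja, ?_, ?_, ?_, ?_, ?_⟩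
    · -- inj_b
      intro x y hxy
      induction x using Fin.lastCases with
      | last =>
        induction y using Fin.lastCases with
        | last => rfl
        | cast j =>
          rw [hblast, hbval] at hxy
          have := match_snd hm' (w.hM' j) (hxy ▸ hb')
          exact absurd (w.inja this) (Fin.ne_of_lt (Fin.castSucc_lt_last j))
      | cast i =>
        induction y using Fin.lastCases with
        | last =>
          rw [hblast, hbval] at hxy
          have := match_snd hm' (w.hM' i) (hxy ▸ hb')
          exact absurd (w.inja this) (Fin.ne_of_lt (Fin.castSucc_lt_last i))
        | cast j =>
          rw [hbval, hbval] at hxy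
          have := match_snd hm' (w.hM' i) (hxy ▸ w.hM' j)
          exact congrArg Fin.castSucc (Fin.castSucc_injective n (w.inja this))
    · -- unmatched_edges
      intro i
      refine ⟨hm'.1 (hinM' i), ?_⟩
      intro hmem
      induction i using Fin.cases with
      | zero => exact hs _ hmem w.ha0
      | succ j =>
        have heq : bb j.succ = w.b j := match_fst hm hmem (w.hM j)
        by_cases hj : j.succ = Fin.last n
        · rw [hj, hblast] at hmem
          exact hmatched _ hmem
        · obtain ⟨i, hi⟩ := Fin.exists_castSucc_eq.mpr hj
          rw [← hi, hbval] at heq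
          have hai := match_snd hm' (w.hM' i) (heq ▸ w.hM' j)
          have : i = j := Fin.castSucc_injective n (w.inja hai)
          rw [this] at hi
          exact absurd hi (Fin.ne_of_lt Fin.castSucc_lt_succ)
    · -- matched_edges
      intro i
      rw [hbval]
      exact w.hM i
    · -- free_start
      rw [w.ha0]; exact hs
    · -- free_end
      rw [hblast]
      intro e he h2
      apply hmatched e.1
      rw [← h2]
      simpa using he

end BergeAux

namespace BergeAux

lemma walk_exists_end [Fintype α] {E M M' : Finset (α × β)} {s : α}
    (hm : IsMatching E M) (hm' : IsMatching E M')
    (hs : UnmatchedA M s)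
    (noaug : ¬ ∃ (k : ℕ) (a : Fin (k + 1) → α) (b : Fin (k + 1) → β), AugPath E M k a b) :
    ∃ (n : ℕ) (w : BWalk M M' s n), ∀ b', (w.a (Fin.last n), b') ∉ M' := by
  classical
  by_contra h
  push_neg at h
  have key : ∀ n, Nonempty (BWalk M M' s n) := by
    intro n
    induction n with
    | zero => exact ⟨BWalk.init s⟩
    | succ m ih =>
      obtain ⟨w⟩ := ih
      obtain ⟨b', hb'⟩ := h m w
      exact walk_extend hm hm' hs noaug w hb'
  obtain ⟨w⟩ := key (Fintype.card α)
  have := Fintype.card_le_of_injective w.a w.inja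
  simp [Fintype.card_fin] at this

lemma walk_end_unique {E M M' : Finset (α × β)}
    (hm : IsMatching E M) (hm' : IsMatching E M') :
    ∀ (n1 : ℕ) {n2 : ℕ} {s1 s2 : α} (w1 : BWalk M M' s1 n1) (w2 : BWalk M M' s2 n2),
      UnmatchedA M s1 → UnmatchedA M s2 →
      w1.a (Fin.last n1) = w2.a (Fin.last n2) → s1 = s2 := by
  intro n1
  induction n1 with
  | zero =>
    intro n2 s1 s2 w1 w2 hs1 hs2 hend
    have h1 : w1.a (Fin.last 0) = s1 := by
      rw [show Fin.last 0 = 0 from rfl, w1.ha0]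
    cases n2 with
    | zero =>
      rw [h1] at hend
      rw [hend, show Fin.last 0 = 0 from rfl, w2.ha0]
    | succ m =>
      exfalso
      have hM2 := w2.hM (Fin.last m)
      rw [Fin.succ_last] at hM2
      rw [h1] at hend
      exact hs1 _ hM2 (by rw [← hend])
  | succ m1 ih =>
    intro n2 s1 s2 w1 w2 hs1 hs2 hend
    cases n2 with
    | zero =>
      exfalso
      have h2 : w2.a (Fin.last 0) = s2 := by
        rw [show Fin.last 0 = 0 from rfl, w2.ha0]
      have hM1 := w1.hM (Fin.last m1)
      rw [Fin.succ_last] at hM1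
      rw [h2] at hend
      exact hs2 _ hM1 hend
    | succ m2 =>
      have hM1 := w1.hM (Fin.last m1)
      have hM2 := w2.hM (Fin.last m2)
      rw [Fin.succ_last] at hM1 hM2
      rw [hend] at hM1
      have hbeq : w1.b (Fin.last m1) = w2.b (Fin.last m2) := match_fst hm hM1 hM2
      have hM'1 := w1.hM' (Fin.last m1)
      have hM'2 := w2.hM' (Fin.last m2)
      rw [hbeq] at hM'1
      have haeq : w1.a (Fin.last m1).castSucc = w2.a (Fin.last m2).castSucc :=
        match_snd hm' hM'1 hM'2
      have hend' : w1.trunc.a (Fin.last m1) = w2.trunc.a (Fin.last m2) := by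
        show w1.a (Fin.castSucc (Fin.last m1)) = w2.a (Fin.castSucc (Fin.last m2))
        exact haeq
      exact ih w1.trunc w2.trunc hs1 hs2 hend'

end BergeAux

namespace BergeAux

open Finset

lemma exists_bigger_matching {E M : Finset (α × β)} (hm : IsMatching E M)
    {k : ℕ} {a : Fin (k + 1) → α} {b : Fin (k + 1) → β} (hp : AugPath E M k a b) :
    ∃ M'' : Finset (α × β), IsMatching E M'' ∧ M.card < M''.card := by
  classical
  set matched : Finset (α × β) :=
    Finset.image (fun i : Fin k => (a i.succ, b i.castSucc)) Finset.univ with hmatched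
  set newE : Finset (α × β) :=
    Finset.image (fun i : Fin (k + 1) => (a i, b i)) Finset.univ with hnewE
  have hmsub : matched ⊆ M := by
    intro e he
    simp only [hmatched, mem_image, mem_univ, true_and] at he
    obtain ⟨i, rfl⟩ := he
    exact hp.matched_edges i
  have hcard_matched : matched.card = k := by
    rw [hmatched, Finset.card_image_of_injective _ ?_, Finset.card_univ, Fintype.card_fin]
    intro i j hij
    exact Fin.succ_injective _ (hp.inj_a (congrArg Prod.fst hij))
  have hcard_new : newE.card = k + 1 := by
    rw [hnewE, Finset.card_image_of_injective _ ?_, Finset.card_univ, Fintype.card_fin]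
    intro i j hij
    exact hp.inj_a (congrArg Prod.fst hij)
  have hnewM : ∀ e ∈ newE, e ∉ M := by
    intro e he
    simp only [hnewE, mem_image, mem_univ, true_and] at he
    obtain ⟨i, rfl⟩ := he
    exact (hp.unmatched_edges i).2
  refine ⟨(M \ matched) ∪ newE, ⟨?_, ?_⟩, ?_⟩
  · intro e he
    rcases Finset.mem_union.mp he with h | h
    · exact hm.1 (Finset.mem_sdiff.mp h).1
    · simp only [hnewE, mem_image, mem_univ, true_and] at h
      obtain ⟨i, rfl⟩ := h
      exact (hp.unmatched_edges i).1
  · -- matching property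
    have key : ∀ e ∈ M \ matched, ∀ j : Fin (k + 1),
        (e.1 = a j ∨ e.2 = b j) → False := by
      intro e he j hej
      obtain ⟨heM, henm⟩ := Finset.mem_sdiff.mp he
      rcases hej with h1 | h2
      · -- e ∈ M with first coordinate a j
        induction j using Fin.cases with
        | zero => exact hp.free_start e heM h1
        | succ i =>
          have : e = (a i.succ, b i.castSucc) :=
            hm.2 e heM _ (hp.matched_edges i) (Or.inl (by rw [h1]))
          exact henm (by rw [this]; simp only [hmatched, mem_image]; exact ⟨i, mem_univ i, rfl⟩)
      · induction j using Fin.lastCases with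
        | last => exact hp.free_end e heM h2
        | cast i =>
          have : e = (a i.succ, b i.castSucc) :=
            hm.2 e heM _ (hp.matched_edges i) (Or.inr (by rw [h2]))
          exact henm (by rw [this]; simp only [hmatched, mem_image]; exact ⟨i, mem_univ i, rfl⟩)
    intro e he f hf hef
    rcases Finset.mem_union.mp he with he' | he' <;> rcases Finset.mem_union.mp hf with hf' | hf'
    · exact hm.2 e (Finset.mem_sdiff.mp he').1 f (Finset.mem_sdiff.mp hf').1 hef
    · simp only [hnewE, mem_image, mem_univ, true_and] at hf'
      obtain ⟨j, rfl⟩ := hf'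
      exact absurd hef (by intro h; exact key e he' j (by simpa using h))
    · simp only [hnewE, mem_image, mem_univ, true_and] at he'
      obtain ⟨j, rfl⟩ := he'
      exact absurd hef (by
        intro h
        exact key f hf' j (by rcases h with h | h; exacts [Or.inl h.symm, Or.inr h.symm]))
    · simp only [hnewE, mem_image, mem_univ, true_and] at he' hf'
      obtain ⟨i, rfl⟩ := he'
      obtain ⟨j, rfl⟩ := hf'
      rcases hef with h | h
      · rw [hp.inj_a h]
      · rw [hp.inj_b h]
  · -- cardinality
    have hdisj : Disjoint (M \ matched) newE := by
      rw [Finset.disjoint_right]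
      intro e he hem
      exact hnewM e he (Finset.mem_sdiff.mp hem).1
    rw [Finset.card_union_of_disjoint hdisj, Finset.card_sdiff_of_subset hmsub,
      hcard_matched, hcard_new]
    have : k ≤ M.card := hcard_matched ▸ Finset.card_le_card hmsub
    omega

end BergeAux

/-- Berge's theorem: a matching `M` in a finite bipartite graph is a maximum
matching if and only if there exists no `M`-augmenting path. -/
theorem berge_maximum_iff_no_augmenting_path
    [Fintype α] [Fintype β]
    (E M : Finset (α × β)) (hM : IsMatching E M) :
    (∀ M', IsMatching E M' → M'.card ≤ M.card) ↔
      ¬ ∃ (k : ℕ) (a : Fin (k + 1) → α) (b : Fin (k + 1) → β),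
          AugPath E M k a b := by
  classical
  constructor
  · rintro hmax ⟨k, a, b, hp⟩
    obtain ⟨M'', hM'', hlt⟩ := BergeAux.exists_bigger_matching hM hp
    exact absurd (hmax M'' hM'') (by omega)
  · intro noaug M' hM'
    set Afst : Finset α := M.image Prod.fst with hAfst
    set A'fst : Finset α := M'.image Prod.fst with hA'fst
    set S : Finset α := A'fst \ Afst with hS
    set T : Finset α := Afst \ A'fst with hT
    have hunA : ∀ s : α, s ∉ Afst → UnmatchedA M s := by
      intro s hs e he h
      exact hs (Finset.mem_image.mpr ⟨e, he, h⟩)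
    -- every start in S reaches, by a walk, an end in T
    have hex : ∀ s ∈ S, ∃ e ∈ T, ∃ (n : ℕ) (w : BergeAux.BWalk M M' s n),
        w.a (Fin.last n) = e := by
      intro s hsS
      obtain ⟨hsA', hsA⟩ := Finset.mem_sdiff.mp hsS
      have hs : UnmatchedA M s := hunA s hsA
      obtain ⟨n, w, hend⟩ := BergeAux.walk_exists_end hM hM' hs noaug
      refine ⟨w.a (Fin.last n), ?_, n, w, rfl⟩
      rw [hT, Finset.mem_sdiff]
      constructor
      · -- the end is matched by M : n must be positive
        cases n with
        | zero =>
          exfalso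
          obtain ⟨e', he', he'1⟩ := Finset.mem_image.mp hsA'
          have h0 : w.a (Fin.last 0) = s := by
            rw [show Fin.last 0 = 0 from rfl, w.ha0]
          apply hend e'.2
          rw [h0, ← he'1]
          simpa using he'
        | succ m =>
          have := w.hM (Fin.last m)
          rw [Fin.succ_last] at this
          exact Finset.mem_image.mpr ⟨_, this, rfl⟩
      · -- the end is unmatched by M'
        intro hmem
        obtain ⟨e', he', he'1⟩ := Finset.mem_image.mp hmem
        apply hend e'.2
        rw [← he'1]
        simpa using he'
    -- injection from S to T
    choose! f hfT hfP using hex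
    have hcardST : S.card ≤ T.card := by
      apply Finset.card_le_card_of_injOn f hfT
      intro s1 hs1 s2 hs2 hff
      obtain ⟨n1, w1, hend1⟩ := hfP s1 hs1
      obtain ⟨n2, w2, hend2⟩ := hfP s2 hs2
      exact BergeAux.walk_end_unique hM hM' n1 w1 w2
        (hunA s1 (Finset.mem_sdiff.mp hs1).2) (hunA s2 (Finset.mem_sdiff.mp hs2).2)
        (by rw [hend1, hend2, hff])
    -- counting
    have hcardA : Afst.card = M.card := by
      rw [hAfst]
      apply Finset.card_image_of_injOn
      intro e he e' he' hee
      exact hM.2 e he e' he' (Or.inl hee)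
    have hcardA' : A'fst.card = M'.card := by
      rw [hA'fst]
      apply Finset.card_image_of_injOn
      intro e he e' he' hee
      exact hM'.2 e he e' he' (Or.inl hee)
    have h1 : S.card + (A'fst ∩ Afst).card = A'fst.card :=
      Finset.card_sdiff_add_card_inter _ _
    have h2 : T.card + (Afst ∩ A'fst).card = Afst.card :=
      Finset.card_sdiff_add_card_inter _ _
    rw [Finset.inter_comm] at h2
    omega
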